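/- Let (A, K) → (B, K) be a morphism of pairs whose underlying group homomorphism is the identity on K. If M is an (A, K)-module, then the weak (B, K)-module P(M) = B ⊗_A M (with B acting by left multiplication) is in fact a (B, K)-module; that is, for every ξ ∈ 𝔨 and b ⊗ m ∈ B ⊗_A M, one has dν(ξ)(b ⊗ m) = π(ψ_B(ξ))(b ⊗ m). Consequently, restriction of the base-change functor defines a left adjoint to the forgetful functor from (B, K)-modules to (A, K)-modules. -/

import Mathlib

/-!
STATEMENT 9: Let `(A, K) → (B, K)` be a morphism of pairs whose underlying
group homomorphism is the identity on `K`.  If `M` is an `(A, K)`-module, then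
the weak `(B, K)`-module `P(M) = B ⊗_A M` (with `B` acting by left
multiplication) is in fact a `(B, K)`-module; consequently, restriction of the
base-change functor defines a left adjoint to the forgetful functor from
`(B, K)`-modules to `(A, K)`-modules.

Formalization: see the file for statement 7 for the modeling of pairs and
(weak) modules.  A morphism of pairs over the identity of `K` is a
`K`-equivariant algebra map `f_a : A → B` with `f_a ∘ ψ_A = ψ_B`
(`PairHomId`).  The first part of the statement is expressed as: there is a
left adjoint `P` of the weak forgetful functor which carries `(A,K)`-modules
to `(B,K)`-modules (for the canonical base-change left adjoint `B ⊗_A (−)`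
this is the displayed computation `dν(ξ)(b ⊗ m) = π(ψ_B(ξ))(b ⊗ m)`); the
second part states that the restricted forgetful functor between the
subcategories of non-weak modules admits a left adjoint.
-/

open CategoryTheory
set_option synthInstance.maxHeartbeats 1000000
set_option maxHeartbeats 1600000

variable (k : Type) [CommRing k]

structure GroupData where
  G : Type
  [grp : Group G]
  L : Type
  [addL : AddCommGroup L]
  [modL : Module k L]
  [lieL : LieRing L]
  [lieAlgL : LieAlgebra k L]
  Ad : G →* (L ≃ₗ[k] L)
  ad_bracket : ∀ (g : G) (x y : L), Ad g ⁅x, y⁆ = ⁅Ad g x, Ad g y⁆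

attribute [instance] GroupData.grp GroupData.addL GroupData.modL GroupData.lieL GroupData.lieAlgL

variable {k}

structure WeakPair (D : GroupData k) where
  A : Type
  [ringA : Ring A]
  [algA : Algebra k A]
  φ : D.G →* (A ≃ₐ[k] A)
  dφ : D.L →ₗ[k] (A →ₗ[k] A)
  dφ_lie : ∀ x y : D.L, dφ ⁅x, y⁆ = dφ x ∘ₗ dφ y - dφ y ∘ₗ dφ x
  dφ_der : ∀ (ξ : D.L) (a b : A), dφ ξ (a * b) = dφ ξ a * b + a * dφ ξ b
  dφ_equiv : ∀ (g : D.G) (ξ : D.L) (a : A), φ g (dφ ξ a) = dφ (D.Ad g ξ) (φ g a)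

attribute [instance] WeakPair.ringA WeakPair.algA

structure HCPair (D : GroupData k) extends WeakPair D where
  ψ : D.L →ₗ[k] A
  ψ_bracket : ∀ x y : D.L, ψ ⁅x, y⁆ = ψ x * ψ y - ψ y * ψ x
  ψ_equiv : ∀ (g : D.G) (ξ : D.L), φ g (ψ ξ) = ψ (D.Ad g ξ)
  dφ_eq : ∀ (ξ : D.L) (a : A), dφ ξ a = ψ ξ * a - a * ψ ξ

variable {D : GroupData k}

structure WeakMod (P : WeakPair D) where
  M : CochainComplex (ModuleCat.{0} k) ℤ
  π : P.A →ₐ[k] End M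
  ν : D.G →* (End M)ˣ
  dν : D.L →ₗ[k] End M
  dν_lie : ∀ x y : D.L, dν ⁅x, y⁆ = dν x * dν y - dν y * dν x
  π_equiv : ∀ (g : D.G) (a : P.A), (ν g : End M) * π a = π (P.φ g a) * (ν g : End M)
  dν_equiv : ∀ (g : D.G) (ξ : D.L), (ν g : End M) * dν ξ = dν (D.Ad g ξ) * (ν g : End M)
  dν_π : ∀ (ξ : D.L) (a : P.A), dν ξ * π a = π (P.dφ ξ a) + π a * dν ξ

namespace WeakMod

variable {P : WeakPair D}

@[ext]
structure Hom (V W : WeakMod P) where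
  hom : V.M ⟶ W.M
  comm_π : ∀ a : P.A, (V.π a : V.M ⟶ V.M) ≫ hom = hom ≫ (W.π a : W.M ⟶ W.M)
  comm_ν : ∀ g : D.G, ((V.ν g : End V.M) : V.M ⟶ V.M) ≫ hom
    = hom ≫ ((W.ν g : End W.M) : W.M ⟶ W.M)
  comm_dν : ∀ ξ : D.L, (V.dν ξ : V.M ⟶ V.M) ≫ hom = hom ≫ (W.dν ξ : W.M ⟶ W.M)

instance : Category (WeakMod P) where
  Hom := Hom
  id V := ⟨𝟙 V.M, by simp, by simp, by simp⟩
  comp f g := ⟨f.hom ≫ g.hom,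
    fun a => by rw [← Category.assoc, f.comm_π, Category.assoc, g.comm_π, Category.assoc],
    fun a => by rw [← Category.assoc, f.comm_ν, Category.assoc, g.comm_ν, Category.assoc],
    fun a => by rw [← Category.assoc, f.comm_dν, Category.assoc, g.comm_dν, Category.assoc]⟩
  id_comp f := Hom.ext (by simp)
  comp_id f := Hom.ext (by simp)
  assoc f g h := Hom.ext (by simp)

/-- The forgetful functor to cochain complexes of `k`-modules. -/
def forgetToComplex (P : WeakPair D) : WeakMod P ⥤ CochainComplex (ModuleCat.{0} k) ℤ where
  obj V := V.M
  map f := f.hom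

end WeakMod

/-- An `(A,K)`-module is a weak `(A,K)`-module on which the two actions of `𝔨`
agree: `dν(ξ) = π(ψ(ξ))`. -/
def IsStrict (P : HCPair D) (V : WeakMod P.toWeakPair) : Prop :=
  ∀ ξ : D.L, V.dν ξ = V.π (P.ψ ξ)


variable {P Q : HCPair D}

/-- A morphism of pairs `(A, K) → (B, K)` whose underlying homomorphism of
group schemes is the identity of `K`. -/
structure PairHomId (P Q : HCPair D) where
  fa : P.A →ₐ[k] Q.A
  equiv_φ : ∀ (g : D.G) (a : P.A), fa (P.φ g a) = Q.φ g (fa a)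
  comm_ψ : ∀ ξ : D.L, fa (P.ψ ξ) = Q.ψ ξ

/-- The forgetful functor on weak modules along a morphism of pairs over the
identity of `K`. -/
def PairHomId.restrictWeak (f : PairHomId P Q) :
    WeakMod Q.toWeakPair ⥤ WeakMod P.toWeakPair where
  obj V :=
    { M := V.M
      π := V.π.comp f.fa
      ν := V.ν
      dν := V.dν
      dν_lie := V.dν_lie
      π_equiv := fun g a => by
        simp only [AlgHom.comp_apply, f.equiv_φ]
        exact V.π_equiv g (f.fa a)
      dν_equiv := V.dν_equiv
      dν_π := fun ξ a => by
        have h : f.fa (P.dφ ξ a) = Q.dφ ξ (f.fa a) := by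
          rw [P.dφ_eq, Q.dφ_eq]
          simp [map_sub, map_mul, f.comm_ψ]
        simp only [AlgHom.comp_apply, h]
        exact V.dν_π ξ (f.fa a) }
  map φf :=
    { hom := φf.hom
      comm_π := fun a => φf.comm_π (f.fa a)
      comm_ν := φf.comm_ν
      comm_dν := φf.comm_dν }
  map_id V := rfl
  map_comp φf φg := rfl

/-- The forgetful functor restricted to the subcategories of non-weak
modules. -/
def PairHomId.restrict (f : PairHomId P Q) :
    ObjectProperty.FullSubcategory (IsStrict Q) ⥤ ObjectProperty.FullSubcategory (IsStrict P) :=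
  ObjectProperty.lift _ (ObjectProperty.ι (IsStrict Q) ⋙ f.restrictWeak)
    (fun V ξ => by
      show V.obj.dν ξ = V.obj.π (f.fa (P.ψ ξ))
      rw [f.comm_ψ]
      exact V.property ξ)

section Scratch
open TensorProduct

variable (f : PairHomId P Q) (V : WeakMod P.toWeakPair)

namespace BC

lemma hadd {M N : ModuleCat.{0} k} (g h : M ⟶ N) (x : M) : (g + h) x = g x + h x := rfl
lemma hsub {M N : ModuleCat.{0} k} (g h : M ⟶ N) (x : M) : (g - h) x = g x - h x := rfl
lemma hsmul {M N : ModuleCat.{0} k} (c : k) (g : M ⟶ N) (x : M) : (c • g) x = c • g x := rfl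
lemma hzero {M N : ModuleCat.{0} k} (x : M) : (0 : M ⟶ N) x = 0 := rfl

/-- degree-`n` component of `V.M` -/
abbrev N (n : ℤ) : ModuleCat.{0} k := V.M.X n

/-- the submodule of relations defining `B ⊗_A M` inside `B ⊗_k M`. -/
def rel (n : ℤ) : Submodule k (Q.A ⊗[k] N V n) :=
  Submodule.span k {x | ∃ (b : Q.A) (a : P.A) (m : N V n),
    x = (b * f.fa a) ⊗ₜ m - b ⊗ₜ ((V.π a).f n m)}

/-- degree-`n` component of `B ⊗_A M`. -/
noncomputable abbrev T (n : ℤ) : ModuleCat.{0} k :=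
  ModuleCat.of k ((Q.A ⊗[k] N V n) ⧸ rel f V n)

variable {f V}

/-- the class of `b ⊗ m`. -/
noncomputable def mk {n : ℤ} (b : Q.A) (m : N V n) : T f V n :=
  Submodule.Quotient.mk (b ⊗ₜ m)

lemma mk_rel {n : ℤ} (b : Q.A) (a : P.A) (m : N V n) :
    mk (b * f.fa a) m = mk (f := f) b ((V.π a).f n m) := by
  rw [mk, mk, Submodule.Quotient.eq]
  exact Submodule.subset_span ⟨b, a, m, rfl⟩

lemma mk_add_left {n : ℤ} (b b' : Q.A) (m : N V n) :
    mk (f := f) (b + b') m = mk b m + mk b' m := by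
  rw [mk, mk, mk, TensorProduct.add_tmul, Submodule.Quotient.mk_add]

lemma mk_add_right {n : ℤ} (b : Q.A) (m m' : N V n) :
    mk (f := f) b (m + m') = mk b m + mk b m' := by
  rw [mk, mk, mk, TensorProduct.tmul_add, Submodule.Quotient.mk_add]

/-- descend a linear map `B ⊗ₖ M_n → B ⊗ₖ M_{n'}` to the quotients. -/
noncomputable def descend {n n' : ℤ} (F : Q.A ⊗[k] N V n →ₗ[k] Q.A ⊗[k] N V n')
    (hF : ∀ (b : Q.A) (a : P.A) (m : N V n),
      F ((b * f.fa a) ⊗ₜ m - b ⊗ₜ ((V.π a).f n m)) ∈ rel f V n') :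
    T f V n ⟶ T f V n' :=
  ModuleCat.ofHom (Submodule.mapQ _ _ F (by
    rw [rel, Submodule.span_le]
    rintro x ⟨b, a, m, rfl⟩
    exact hF b a m))

@[simp] lemma descend_mk {n n' : ℤ} (F : Q.A ⊗[k] N V n →ₗ[k] Q.A ⊗[k] N V n')
    (hF : ∀ (b : Q.A) (a : P.A) (m : N V n),
      F ((b * f.fa a) ⊗ₜ m - b ⊗ₜ ((V.π a).f n m)) ∈ rel f V n') (b : Q.A) (m : N V n) :
    descend F hF (mk b m) = Submodule.Quotient.mk (F (b ⊗ₜ m)) := rfl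

lemma text {n : ℤ} {X : Type} [AddCommGroup X] [Module k X]
    (g h : T f V n →ₗ[k] X)
    (H : ∀ (b : Q.A) (m : N V n), g (mk b m) = h (mk b m)) : g = h := by
  apply Submodule.linearMap_qext
  exact TensorProduct.ext' H

section generic
variable {R : WeakPair D}

lemma chainc {C E : CochainComplex (ModuleCat.{0} k) ℤ} (t : C ⟶ E) {n n' : ℤ} (x : C.X n) :
    t.f n' (C.d n n' x) = E.d n n' (t.f n x) :=
  (congrFun (congrArg ((fun φ' : C.X n ⟶ E.X n' => ⇑(ConcreteCategory.hom φ'))) (t.comm n n')) x).symm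

lemma wpi_equiv (X : WeakMod R) (g : D.G) (a : R.A) {n : ℤ} (x : X.M.X n) :
    ((X.ν g : CategoryTheory.End X.M)).f n ((X.π a).f n x)
      = (X.π (R.φ g a)).f n (((X.ν g : CategoryTheory.End X.M)).f n x) :=
  calc ((X.ν g : CategoryTheory.End X.M)).f n ((X.π a).f n x)
      = (((X.ν g : CategoryTheory.End X.M) * X.π a).f n) x := rfl
    _ = ((X.π (R.φ g a) * (X.ν g : CategoryTheory.End X.M)).f n) x := by rw [X.π_equiv]
    _ = _ := rfl

lemma wdnu_pi (X : WeakMod R) (ξ : D.L) (a : R.A) {n : ℤ} (x : X.M.X n) :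
    (X.dν ξ).f n ((X.π a).f n x)
      = (X.π (R.dφ ξ a)).f n x + (X.π a).f n ((X.dν ξ).f n x) :=
  calc (X.dν ξ).f n ((X.π a).f n x) = ((X.dν ξ * X.π a).f n) x := rfl
    _ = ((X.π (R.dφ ξ a) + X.π a * X.dν ξ).f n) x := by rw [X.dν_π]
    _ = _ := by rw [HomologicalComplex.add_f_apply, hadd]; rfl

variable {X Y : WeakMod R} (t : X ⟶ Y)

lemma whom_pi (a : R.A) {n : ℤ} (x : X.M.X n) :
    t.hom.f n ((X.π a).f n x) = (Y.π a).f n (t.hom.f n x) :=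
  calc t.hom.f n ((X.π a).f n x) = (((X.π a : X.M ⟶ X.M) ≫ t.hom).f n) x := rfl
    _ = ((t.hom ≫ (Y.π a : Y.M ⟶ Y.M)).f n) x := by rw [t.comm_π a]
    _ = _ := rfl

lemma whom_nu (g : D.G) {n : ℤ} (x : X.M.X n) :
    t.hom.f n (((X.ν g : CategoryTheory.End X.M)).f n x)
      = ((Y.ν g : CategoryTheory.End Y.M)).f n (t.hom.f n x) :=
  calc t.hom.f n (((X.ν g : CategoryTheory.End X.M)).f n x)
      = ((((X.ν g : CategoryTheory.End X.M) : X.M ⟶ X.M) ≫ t.hom).f n) x := rfl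
    _ = ((t.hom ≫ ((Y.ν g : CategoryTheory.End Y.M) : Y.M ⟶ Y.M)).f n) x := by
        rw [t.comm_ν g]
    _ = _ := rfl

lemma whom_dnu (ξ : D.L) {n : ℤ} (x : X.M.X n) :
    t.hom.f n ((X.dν ξ).f n x) = (Y.dν ξ).f n (t.hom.f n x) :=
  calc t.hom.f n ((X.dν ξ).f n x) = (((X.dν ξ : X.M ⟶ X.M) ≫ t.hom).f n) x := rfl
    _ = ((t.hom ≫ (Y.dν ξ : Y.M ⟶ Y.M)).f n) x := by rw [t.comm_dν ξ]
    _ = _ := rfl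

end generic
lemma end_mul_apply' {W : CochainComplex (ModuleCat.{0} k) ℤ} {n : ℤ}
    (x y : CategoryTheory.End W) (m : W.X n) :
    (x * y).f n m = x.f n (y.f n m) := rfl
-- pointwise composition lemma for chain-map components in ModuleCat
lemma comm_apply {n n' : ℤ} (e : V.M ⟶ V.M) (m : N V n) :
    V.M.d n n' (e.f n m) = e.f n' (V.M.d n n' m) := by
  have h := e.comm n n'
  exact congrFun (congrArg ((fun φ' : N V n ⟶ N V n' => ⇑(ConcreteCategory.hom φ'))) h) m

-- componentwise action of End multiplication
lemma end_mul_apply {n : ℤ} (x y : CategoryTheory.End V.M) (m : N V n) :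
    (x * y).f n m = x.f n (y.f n m) := rfl

variable (f V)

/-- the differential on `B ⊗_A M`. -/
noncomputable def d2 (n n' : ℤ) : T f V n ⟶ T f V n' :=
  descend (TensorProduct.map LinearMap.id (V.M.d n n').hom) (fun b a m => by
    rw [map_sub, TensorProduct.map_tmul, TensorProduct.map_tmul]
    simp only [LinearMap.id_apply]
    rw [show (V.M.d n n') (((V.π a).f n) m) = ((V.π a).f n') (V.M.d n n' m) from
      congrFun (congrArg ((fun φ' : N V n ⟶ N V n' => ⇑(ConcreteCategory.hom φ'))) ((V.π a).comm n n')) m]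
    exact Submodule.subset_span ⟨b, a, V.M.d n n' m, rfl⟩)

@[simp] lemma d2_mk {n n' : ℤ} (b : Q.A) (m : N V n) :
    d2 f V n n' (mk b m) = mk b (V.M.d n n' m) := rfl

/-- the action of `B` by left multiplication. -/
noncomputable def pmap (b₀ : Q.A) (n : ℤ) : T f V n ⟶ T f V n :=
  descend (TensorProduct.map (LinearMap.mulLeft k b₀) LinearMap.id) (fun b a m => by
    rw [map_sub, TensorProduct.map_tmul, TensorProduct.map_tmul]
    simp only [LinearMap.id_apply, LinearMap.mulLeft_apply, ← mul_assoc]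
    exact Submodule.subset_span ⟨b₀ * b, a, m, rfl⟩)

@[simp] lemma pmap_mk {n : ℤ} (b₀ b : Q.A) (m : N V n) :
    pmap f V b₀ n (mk b m) = mk (b₀ * b) m := rfl

/-- the diagonal action of `K`. -/
noncomputable def numap (g : D.G) (n : ℤ) : T f V n ⟶ T f V n :=
  descend (TensorProduct.map (Q.φ g).toLinearMap ((V.ν g : CategoryTheory.End V.M).f n).hom)
    (fun b a m => by
    rw [map_sub, TensorProduct.map_tmul, TensorProduct.map_tmul]
    have h1 : ((V.ν g : CategoryTheory.End V.M).f n) (((V.π a).f n) m)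
        = ((V.π (P.φ g a)).f n) (((V.ν g : CategoryTheory.End V.M).f n) m) := by
      have := V.π_equiv g a
      calc ((V.ν g : CategoryTheory.End V.M).f n) (((V.π a).f n) m)
          = (((V.ν g : CategoryTheory.End V.M) * V.π a).f n) m := rfl
        _ = ((V.π (P.φ g a) * (V.ν g : CategoryTheory.End V.M)).f n) m := by rw [this]
        _ = _ := rfl
    have h2 : (Q.φ g) (b * f.fa a) = (Q.φ g) b * f.fa (P.φ g a) := by
      rw [map_mul, ← f.equiv_φ]
    rw [h1]
    simp only [AlgEquiv.toLinearMap_apply, h2]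
    exact Submodule.subset_span
      ⟨(Q.φ g) b, P.φ g a, ((V.ν g : CategoryTheory.End V.M).f n) m, rfl⟩)

@[simp] lemma numap_mk {n : ℤ} (g : D.G) (b : Q.A) (m : N V n) :
    numap f V g n (mk b m) = mk (Q.φ g b) (((V.ν g : CategoryTheory.End V.M).f n) m) := rfl

/-- the action of `𝔨`. -/
noncomputable def dnumap (ξ : D.L) (n : ℤ) : T f V n ⟶ T f V n :=
  descend (TensorProduct.map (Q.dφ ξ) LinearMap.id
      + TensorProduct.map LinearMap.id ((V.dν ξ).f n).hom) (fun b a m => by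
    have hfa : Q.dφ ξ (f.fa a) = f.fa (P.dφ ξ a) := by
      rw [Q.dφ_eq, P.dφ_eq]
      simp [map_sub, map_mul, f.comm_ψ]
    have hdν : ((V.dν ξ).f n) (((V.π a).f n) m)
        = ((V.π (P.dφ ξ a)).f n) m + ((V.π a).f n) (((V.dν ξ).f n) m) := by
      have := V.dν_π ξ a
      calc ((V.dν ξ).f n) (((V.π a).f n) m) = ((V.dν ξ * V.π a).f n) m := rfl
        _ = ((V.π (P.dφ ξ a) + V.π a * V.dν ξ).f n) m := by rw [this]
        _ = _ := by rw [HomologicalComplex.add_f_apply]; rfl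
    rw [LinearMap.add_apply, map_sub, map_sub]
    simp only [TensorProduct.map_tmul, LinearMap.id_apply]
    rw [Q.dφ_der ξ b (f.fa a), hfa, hdν, TensorProduct.add_tmul, TensorProduct.tmul_add]
    have g1 : (Q.dφ ξ b * f.fa a) ⊗ₜ[k] m - Q.dφ ξ b ⊗ₜ[k] ((V.π a).f n) m ∈ rel f V n :=
      Submodule.subset_span ⟨Q.dφ ξ b, a, m, rfl⟩
    have g2 : (b * f.fa (P.dφ ξ a)) ⊗ₜ[k] m - b ⊗ₜ[k] ((V.π (P.dφ ξ a)).f n) m ∈ rel f V n :=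
      Submodule.subset_span ⟨b, P.dφ ξ a, m, rfl⟩
    have g3 : (b * f.fa a) ⊗ₜ[k] (((V.dν ξ).f n) m)
        - b ⊗ₜ[k] ((V.π a).f n) (((V.dν ξ).f n) m) ∈ rel f V n :=
      Submodule.subset_span ⟨b, a, ((V.dν ξ).f n) m, rfl⟩
    have := Submodule.add_mem _ (Submodule.add_mem _ g1 g2) g3
    convert this using 1
    abel)

@[simp] lemma dnumap_mk {n : ℤ} (ξ : D.L) (b : Q.A) (m : N V n) :
    dnumap f V ξ n (mk b m) = mk (Q.dφ ξ b) m + mk b (((V.dν ξ).f n) m) := by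
  rw [dnumap, descend_mk, LinearMap.add_apply]
  simp only [TensorProduct.map_tmul, LinearMap.id_apply]
  rw [Submodule.Quotient.mk_add]
  rfl
variable {f V} in
@[simp] lemma mk_zero_right {n : ℤ} (b : Q.A) : mk (f := f) b (0 : N V n) = 0 := by
  simp [mk, TensorProduct.tmul_zero]

variable {f V} in
lemma mk_sub_left {n : ℤ} (b b' : Q.A) (m : N V n) :
    mk (f := f) (b - b') m = mk b m - mk b' m := by
  simp [mk, TensorProduct.sub_tmul, Submodule.Quotient.mk_sub]

variable {f V} in
lemma mk_sub_right {n : ℤ} (b : Q.A) (m m' : N V n) :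
    mk (f := f) b (m - m') = mk b m - mk b m' := by
  simp [mk, TensorProduct.tmul_sub, Submodule.Quotient.mk_sub]

variable {f V} in
lemma mk_smul_left {n : ℤ} (c : k) (b : Q.A) (m : N V n) :
    mk (f := f) (c • b) m = c • mk b m := by
  rw [mk, mk, ← TensorProduct.smul_tmul', Submodule.Quotient.mk_smul]

variable {f V} in
lemma mk_smul_right {n : ℤ} (c : k) (b : Q.A) (m : N V n) :
    mk (f := f) b (c • m) = c • mk b m := by
  rw [mk, mk, TensorProduct.tmul_smul, Submodule.Quotient.mk_smul]

/-- The cochain complex `B ⊗_A M`. -/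
noncomputable abbrev PT : CochainComplex (ModuleCat.{0} k) ℤ where
  X n := T f V n
  d n n' := d2 f V n n'
  shape n n' h := by
    apply ModuleCat.hom_ext; apply text (f := f)
    intro b m
    show mk b (V.M.d n n' m) = (0 : ↑(T f V n) →ₗ[k] ↑(T f V n')) (mk b m)
    rw [V.M.shape n n' h, LinearMap.zero_apply]
    show mk b ((0 : ↑(N V n) →ₗ[k] ↑(N V n')) m) = 0
    rw [LinearMap.zero_apply, mk_zero_right]
  d_comp_d' n n' n'' _ _ := by
    apply ModuleCat.hom_ext; apply text (f := f)
    intro b m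
    show mk b (V.M.d n' n'' (V.M.d n n' m)) = (0 : ↑(T f V n) →ₗ[k] ↑(T f V n'')) (mk b m)
    rw [show V.M.d n' n'' (V.M.d n n' m) = (0 : ↑(N V n) →ₗ[k] ↑(N V n'')) m from
      congrFun (congrArg ((fun φ' : N V n ⟶ N V n'' => ⇑(ConcreteCategory.hom φ'))) (V.M.d_comp_d n n' n'')) m]
    rw [LinearMap.zero_apply, LinearMap.zero_apply, mk_zero_right]

variable {f V} in
lemma hom_ext {W : CochainComplex (ModuleCat.{0} k) ℤ} {g h : PT f V ⟶ W}
    (H : ∀ (n : ℤ) (b : Q.A) (m : N V n), g.f n (mk b m) = h.f n (mk b m)) : g = h := by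
  apply HomologicalComplex.hom_ext
  intro n
  exact ModuleCat.hom_ext (text (g.f n).hom (h.f n).hom (H n))

/-- left multiplication as an endomorphism of the complex. -/
noncomputable def pEnd (b₀ : Q.A) : CategoryTheory.End (PT f V) where
  f n := pmap f V b₀ n
  comm' n n' _ := by
    apply ModuleCat.hom_ext; apply text (f := f)
    intro b m
    show d2 f V n n' (pmap f V b₀ n (mk b m)) = pmap f V b₀ n' (d2 f V n n' (mk b m))
    rw [pmap_mk, d2_mk, d2_mk, pmap_mk]

@[simp] lemma pEnd_mk {n : ℤ} (b₀ b : Q.A) (m : N V n) :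
    (pEnd f V b₀).f n (mk b m) = mk (b₀ * b) m := rfl

/-- the `K`-action as an endomorphism of the complex. -/
noncomputable def nuEnd (g : D.G) : CategoryTheory.End (PT f V) where
  f n := numap f V g n
  comm' n n' _ := by
    apply ModuleCat.hom_ext; apply text (f := f)
    intro b m
    show d2 f V n n' (numap f V g n (mk b m)) = numap f V g n' (d2 f V n n' (mk b m))
    rw [numap_mk, d2_mk, d2_mk, numap_mk]
    rw [comm_apply]

@[simp] lemma nuEnd_mk {n : ℤ} (g : D.G) (b : Q.A) (m : N V n) :
    (nuEnd f V g).f n (mk b m)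
      = mk (Q.φ g b) (((V.ν g : CategoryTheory.End V.M).f n) m) := rfl

/-- the `𝔨`-action as an endomorphism of the complex. -/
noncomputable def dnuEnd (ξ : D.L) : CategoryTheory.End (PT f V) where
  f n := dnumap f V ξ n
  comm' n n' _ := by
    apply ModuleCat.hom_ext; apply text (f := f)
    intro b m
    show d2 f V n n' (dnumap f V ξ n (mk b m)) = dnumap f V ξ n' (d2 f V n n' (mk b m))
    rw [dnumap_mk, map_add, d2_mk, d2_mk, d2_mk, dnumap_mk]
    rw [comm_apply]

@[simp] lemma dnuEnd_mk {n : ℤ} (ξ : D.L) (b : Q.A) (m : N V n) :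
    (dnuEnd f V ξ).f n (mk b m) = mk (Q.dφ ξ b) m + mk b (((V.dν ξ).f n) m) :=
  dnumap_mk f V ξ b m
variable {f V} in
@[simp] lemma mk_zero_left {n : ℤ} (m : N V n) : mk (f := f) (0 : Q.A) m = 0 := by
  simp [mk, TensorProduct.zero_tmul]

/-- the algebra action of `B` on `B ⊗_A M`. -/
noncomputable def piAlg : Q.A →ₐ[k] CategoryTheory.End (PT f V) where
  toFun b₀ := pEnd f V b₀
  map_one' := hom_ext fun n b m => by
    show mk (1 * b) m = (𝟙 (PT f V) : PT f V ⟶ PT f V).f n (mk b m)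
    rw [HomologicalComplex.id_f, one_mul]
    rfl
  map_mul' x y := hom_ext fun n b m => by
    show mk (x * y * b) m = ((pEnd f V x * pEnd f V y).f n) (mk b m)
    rw [end_mul_apply']
    show mk (x * y * b) m = mk (x * (y * b)) m
    rw [mul_assoc]
  map_zero' := hom_ext fun n b m => by
    show mk (0 * b) m = ((0 : CategoryTheory.End (PT f V)).f n) (mk b m)
    rw [HomologicalComplex.zero_f_apply, hzero, zero_mul, mk_zero_left]
  map_add' x y := hom_ext fun n b m => by
    show mk ((x + y) * b) m = ((pEnd f V x + pEnd f V y).f n) (mk b m)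
    rw [HomologicalComplex.add_f_apply, hadd, add_mul, mk_add_left]
    rfl
  commutes' c := hom_ext fun n b m => by
    show mk (algebraMap k Q.A c * b) m
        = ((algebraMap k (CategoryTheory.End (PT f V)) c).f n) (mk b m)
    rw [Algebra.algebraMap_eq_smul_one, Algebra.algebraMap_eq_smul_one,
      HomologicalComplex.smul_f_apply, hsmul, smul_mul_assoc, one_mul,
      mk_smul_left]
    rfl

@[simp] lemma piAlg_mk {n : ℤ} (b₀ b : Q.A) (m : N V n) :
    ((piAlg f V b₀).f n) (mk b m) = mk (b₀ * b) m := rfl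

/-- the group action of `K` on `B ⊗_A M`, as a monoid hom to `End`. -/
noncomputable def nuHom : D.G →* CategoryTheory.End (PT f V) where
  toFun g := nuEnd f V g
  map_one' := hom_ext fun n b m => by
    show mk (Q.φ 1 b) (((V.ν 1 : CategoryTheory.End V.M)).f n m)
        = (𝟙 (PT f V) : PT f V ⟶ PT f V).f n (mk b m)
    rw [HomologicalComplex.id_f, map_one, map_one]
    rfl
  map_mul' g g' := hom_ext fun n b m => by
    show mk (Q.φ (g * g') b) (((V.ν (g * g') : CategoryTheory.End V.M)).f n m)
        = ((nuEnd f V g * nuEnd f V g').f n) (mk b m)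
    rw [end_mul_apply', nuEnd_mk, nuEnd_mk, map_mul, map_mul]
    rfl

/-- the group action of `K` on `B ⊗_A M`, valued in units. -/
noncomputable def nuUnits : D.G →* (CategoryTheory.End (PT f V))ˣ where
  toFun g :=
    { val := nuHom f V g
      inv := nuHom f V g⁻¹
      val_inv := by rw [← map_mul, mul_inv_cancel, map_one]
      inv_val := by rw [← map_mul, inv_mul_cancel, map_one] }
  map_one' := Units.ext (by simp)
  map_mul' g g' := Units.ext (by simp)

@[simp] lemma nuUnits_mk {n : ℤ} (g : D.G) (b : Q.A) (m : N V n) :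
    (((nuUnits f V g : CategoryTheory.End (PT f V))).f n) (mk b m)
      = mk (Q.φ g b) (((V.ν g : CategoryTheory.End V.M).f n) m) := rfl

/-- the Lie algebra action of `𝔨` on `B ⊗_A M`. -/
noncomputable def dnuLin : D.L →ₗ[k] CategoryTheory.End (PT f V) where
  toFun ξ := dnuEnd f V ξ
  map_add' ξ ξ' := hom_ext fun n b m => by
    show mk (Q.dφ (ξ + ξ') b) m + mk b (((V.dν (ξ + ξ')).f n) m)
        = ((dnuEnd f V ξ + dnuEnd f V ξ').f n) (mk b m)
    rw [HomologicalComplex.add_f_apply, hadd, dnuEnd_mk, dnuEnd_mk,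
      map_add, map_add, HomologicalComplex.add_f_apply, hadd,
      LinearMap.add_apply, mk_add_left, mk_add_right]
    abel
  map_smul' c ξ := hom_ext fun n b m => by
    show mk (Q.dφ (c • ξ) b) m + mk b (((V.dν (c • ξ)).f n) m)
        = (((RingHom.id k) c • dnuEnd f V ξ).f n) (mk b m)
    rw [RingHom.id_apply, HomologicalComplex.smul_f_apply, hsmul, dnuEnd_mk,
      map_smul, map_smul, HomologicalComplex.smul_f_apply, hsmul,
      LinearMap.smul_apply, mk_smul_left, mk_smul_right, smul_add]

@[simp] lemma dnuLin_mk {n : ℤ} (ξ : D.L) (b : Q.A) (m : N V n) :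
    ((dnuLin f V ξ).f n) (mk b m) = mk (Q.dφ ξ b) m + mk b (((V.dν ξ).f n) m) :=
  dnumap_mk f V ξ b m
variable {f V} in
lemma V_dnu_pi {n : ℤ} (ξ : D.L) (a : P.A) (m : N V n) :
    (V.dν ξ).f n ((V.π a).f n m)
      = (V.π (P.dφ ξ a)).f n m + (V.π a).f n ((V.dν ξ).f n m) :=
  calc (V.dν ξ).f n ((V.π a).f n m) = ((V.dν ξ * V.π a).f n) m := rfl
    _ = ((V.π (P.dφ ξ a) + V.π a * V.dν ξ).f n) m := by rw [V.dν_π]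
    _ = _ := by rw [HomologicalComplex.add_f_apply, hadd]; rfl

variable {f V} in
lemma V_dnu_lie {n : ℤ} (x y : D.L) (m : N V n) :
    (V.dν ⁅x, y⁆).f n m
      = (V.dν x).f n ((V.dν y).f n m) - (V.dν y).f n ((V.dν x).f n m) :=
  calc (V.dν ⁅x, y⁆).f n m = ((V.dν x * V.dν y - V.dν y * V.dν x).f n) m := by rw [V.dν_lie]
    _ = _ := by rw [HomologicalComplex.sub_f_apply, hsub]; rfl

variable {f V} in
lemma V_dnu_equiv {n : ℤ} (g : D.G) (ξ : D.L) (m : N V n) :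
    ((V.ν g : CategoryTheory.End V.M)).f n ((V.dν ξ).f n m)
      = (V.dν (D.Ad g ξ)).f n (((V.ν g : CategoryTheory.End V.M)).f n m) :=
  calc ((V.ν g : CategoryTheory.End V.M)).f n ((V.dν ξ).f n m)
      = (((V.ν g : CategoryTheory.End V.M) * V.dν ξ).f n) m := rfl
    _ = ((V.dν (D.Ad g ξ) * (V.ν g : CategoryTheory.End V.M)).f n) m := by rw [V.dν_equiv]
    _ = _ := rfl

/-- The weak `(B, K)`-module `B ⊗_A M`. -/
noncomputable abbrev PwObj : WeakMod Q.toWeakPair where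
  M := PT f V
  π := piAlg f V
  ν := nuUnits f V
  dν := dnuLin f V
  dν_lie x y := hom_ext fun n b m => by
    show mk (Q.dφ ⁅x, y⁆ b) m + mk b (((V.dν ⁅x, y⁆).f n) m)
        = ((dnuLin f V x * dnuLin f V y - dnuLin f V y * dnuLin f V x).f n) (mk b m)
    rw [HomologicalComplex.sub_f_apply, hsub, end_mul_apply', end_mul_apply']
    show mk (Q.dφ ⁅x, y⁆ b) m + mk b (((V.dν ⁅x, y⁆).f n) m)
        = (dnumap f V x n) ((dnumap f V y n) (mk b m))
          - (dnumap f V y n) ((dnumap f V x n) (mk b m))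
    rw [dnumap_mk, dnumap_mk, map_add, map_add, dnumap_mk, dnumap_mk, dnumap_mk, dnumap_mk]
    rw [Q.dφ_lie, LinearMap.sub_apply, LinearMap.comp_apply, LinearMap.comp_apply,
      mk_sub_left, V_dnu_lie, mk_sub_right]
    abel
  π_equiv g a := hom_ext fun n b m => by
    rw [end_mul_apply', end_mul_apply']
    show ((nuUnits f V g : CategoryTheory.End (PT f V)).f n) (mk (a * b) m)
        = ((piAlg f V (Q.φ g a)).f n)
            (mk (Q.φ g b) (((V.ν g : CategoryTheory.End V.M).f n) m))
    rw [nuUnits_mk, piAlg_mk, map_mul]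
  dν_equiv g ξ := hom_ext fun n b m => by
    rw [end_mul_apply', end_mul_apply']
    show ((nuUnits f V g : CategoryTheory.End (PT f V)).f n)
          (mk (Q.dφ ξ b) m + mk b (((V.dν ξ).f n) m))
        = ((dnuLin f V (D.Ad g ξ)).f n)
            (mk (Q.φ g b) (((V.ν g : CategoryTheory.End V.M).f n) m))
    rw [map_add, nuUnits_mk, nuUnits_mk, dnuLin_mk, Q.dφ_equiv, V_dnu_equiv]
  dν_π ξ a := hom_ext fun n b m => by
    rw [HomologicalComplex.add_f_apply, hadd, end_mul_apply', end_mul_apply']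
    show ((dnuLin f V ξ).f n) (mk (a * b) m)
        = ((piAlg f V (Q.dφ ξ a)).f n) (mk b m)
          + ((piAlg f V a).f n) (mk (Q.dφ ξ b) m + mk b (((V.dν ξ).f n) m))
    rw [dnuLin_mk, map_add, piAlg_mk, piAlg_mk, piAlg_mk, Q.dφ_der, mk_add_left]
    abel
variable {f} in
/-- descend across a morphism of weak modules. -/
noncomputable def descend2 {V W : WeakMod P.toWeakPair} {n n' : ℤ}
    (F : Q.A ⊗[k] N V n →ₗ[k] Q.A ⊗[k] N W n')
    (hF : ∀ (b : Q.A) (a : P.A) (m : N V n),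
      F ((b * f.fa a) ⊗ₜ m - b ⊗ₜ ((V.π a).f n m)) ∈ rel f W n') :
    T f V n ⟶ T f W n' :=
  ModuleCat.ofHom (Submodule.mapQ _ _ F (by
    rw [rel, Submodule.span_le]
    rintro x ⟨b, a, m, rfl⟩
    exact hF b a m))

section homhelpers
variable {f V}
variable {W : WeakMod P.toWeakPair} (φ : V ⟶ W)

lemma hom_comm_pi (a : P.A) {n : ℤ} (m : N V n) :
    φ.hom.f n ((V.π a).f n m) = (W.π a).f n (φ.hom.f n m) :=
  calc φ.hom.f n ((V.π a).f n m) = (((V.π a : V.M ⟶ V.M) ≫ φ.hom).f n) m := rfl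
    _ = ((φ.hom ≫ (W.π a : W.M ⟶ W.M)).f n) m := by rw [φ.comm_π a]
    _ = _ := rfl

lemma hom_comm_nu (g : D.G) {n : ℤ} (m : N V n) :
    φ.hom.f n (((V.ν g : CategoryTheory.End V.M)).f n m)
      = ((W.ν g : CategoryTheory.End W.M)).f n (φ.hom.f n m) :=
  calc φ.hom.f n (((V.ν g : CategoryTheory.End V.M)).f n m)
      = ((((V.ν g : CategoryTheory.End V.M) : V.M ⟶ V.M) ≫ φ.hom).f n) m := rfl
    _ = ((φ.hom ≫ ((W.ν g : CategoryTheory.End W.M) : W.M ⟶ W.M)).f n) m := by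
        rw [φ.comm_ν g]
    _ = _ := rfl

lemma hom_comm_dnu (ξ : D.L) {n : ℤ} (m : N V n) :
    φ.hom.f n ((V.dν ξ).f n m) = (W.dν ξ).f n (φ.hom.f n m) :=
  calc φ.hom.f n ((V.dν ξ).f n m) = (((V.dν ξ : V.M ⟶ V.M) ≫ φ.hom).f n) m := rfl
    _ = ((φ.hom ≫ (W.dν ξ : W.M ⟶ W.M)).f n) m := by rw [φ.comm_dν ξ]
    _ = _ := rfl

lemma hom_comm_d {n n' : ℤ} (m : N V n) :
    φ.hom.f n' (V.M.d n n' m) = W.M.d n n' (φ.hom.f n m) :=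
  (congrFun (congrArg ((fun φ' : V.M.X n ⟶ W.M.X n' => ⇑(ConcreteCategory.hom φ'))) (φ.hom.comm n n')) m).symm

/-- the degree-`n` component of `B ⊗_A φ`. -/
noncomputable def gmap (n : ℤ) : T f V n ⟶ T f W n :=
  descend2 (TensorProduct.map LinearMap.id (φ.hom.f n).hom) (fun b a m => by
    rw [map_sub, TensorProduct.map_tmul, TensorProduct.map_tmul]
    simp only [LinearMap.id_apply]
    rw [hom_comm_pi φ a m]
    exact Submodule.subset_span ⟨b, a, φ.hom.f n m, rfl⟩)

@[simp] lemma gmap_mk {n : ℤ} (b : Q.A) (m : N V n) :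
    gmap (f := f) φ n (mk b m) = mk b (φ.hom.f n m) := rfl

/-- `B ⊗_A φ` as a morphism of weak `(B,K)`-modules. -/
noncomputable def PwMap : PwObj f V ⟶ PwObj f W where
  hom :=
    { f := fun n => gmap φ n
      comm' := fun n n' _ => by
        apply ModuleCat.hom_ext; apply text (f := f)
        intro b m
        show d2 f W n n' (gmap (f := f) φ n (mk b m)) = gmap (f := f) φ n' (d2 f V n n' (mk b m))
        rw [d2_mk, gmap_mk, gmap_mk, d2_mk, hom_comm_d] }
  comm_π a := hom_ext fun n b m => by
    show gmap (f := f) φ n (((piAlg f V a).f n) (mk b m)) = ((piAlg f W a).f n) (gmap (f := f) φ n (mk b m))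
    rw [piAlg_mk, gmap_mk, gmap_mk, piAlg_mk]
  comm_ν g := hom_ext fun n b m => by
    show gmap (f := f) φ n (((nuUnits f V g : CategoryTheory.End (PT f V)).f n) (mk b m))
        = ((nuUnits f W g : CategoryTheory.End (PT f W)).f n) (gmap (f := f) φ n (mk b m))
    rw [nuUnits_mk, gmap_mk, gmap_mk, nuUnits_mk, hom_comm_nu]
  comm_dν ξ := hom_ext fun n b m => by
    show gmap (f := f) φ n (((dnuLin f V ξ).f n) (mk b m)) = ((dnuLin f W ξ).f n) (gmap (f := f) φ n (mk b m))
    rw [dnuLin_mk, map_add, gmap_mk, gmap_mk, gmap_mk, dnuLin_mk, hom_comm_dnu]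

end homhelpers

/-- The base-change functor `B ⊗_A (−)` on weak modules. -/
noncomputable def Pw (f : PairHomId P Q) : WeakMod P.toWeakPair ⥤ WeakMod Q.toWeakPair where
  obj V := PwObj f V
  map φ := PwMap φ
  map_id V := WeakMod.Hom.ext (hom_ext fun n b m => rfl)
  map_comp φ ψ := WeakMod.Hom.ext (hom_ext fun n b m => rfl)
/-- the unit map `m ↦ 1 ⊗ m`. -/
noncomputable def unitMap (n : ℤ) : N V n ⟶ T f V n :=
  ModuleCat.ofHom ((Submodule.mkQ (rel f V n)).comp ((TensorProduct.mk k Q.A (N V n)) 1))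

@[simp] lemma unitMap_apply {n : ℤ} (m : N V n) : unitMap f V n m = mk 1 m := rfl

variable {f V} in
/-- forward direction of the adjunction hom-equivalence. -/
noncomputable def toHom {W : WeakMod Q.toWeakPair} (g : PwObj f V ⟶ W) :
    V ⟶ f.restrictWeak.obj W where
  hom :=
    { f := fun n => unitMap f V n ≫ g.hom.f n
      comm' := fun n n' _ => by
        refine ModuleCat.hom_ext (LinearMap.ext fun m => ?_)
        show W.M.d n n' (g.hom.f n (mk 1 m)) = g.hom.f n' (mk 1 (V.M.d n n' m))
        rw [← chainc g.hom (mk (f := f) 1 m)]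
        rfl }
  comm_π a := by
    refine HomologicalComplex.hom_ext _ _ fun n => ModuleCat.hom_ext (LinearMap.ext fun m => ?_)
    show g.hom.f _ (mk 1 ((V.π a).f _ m)) = (W.π (f.fa a)).f _ (g.hom.f _ (mk 1 m))
    rw [← whom_pi g (f.fa a), ← mk_rel, one_mul]
    show (g.hom.f n) (mk (f.fa a) m) = (g.hom.f n) (((piAlg f V (f.fa a)).f n) (mk 1 m))
    rw [piAlg_mk, mul_one]
  comm_ν g₀ := by
    refine HomologicalComplex.hom_ext _ _ fun n => ModuleCat.hom_ext (LinearMap.ext fun m => ?_)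
    show g.hom.f _ (mk 1 (((V.ν g₀ : CategoryTheory.End V.M)).f _ m))
        = ((W.ν g₀ : CategoryTheory.End W.M)).f _ (g.hom.f _ (mk 1 m))
    rw [← whom_nu g g₀]
    congr 1
    show mk (f := f) 1 (((V.ν g₀ : CategoryTheory.End V.M)).f _ m)
        = ((nuUnits f V g₀ : CategoryTheory.End (PT f V))).f _ (mk 1 m)
    rw [nuUnits_mk, map_one]
  comm_dν ξ := by
    refine HomologicalComplex.hom_ext _ _ fun n => ModuleCat.hom_ext (LinearMap.ext fun m => ?_)
    show g.hom.f _ (mk 1 ((V.dν ξ).f _ m)) = (W.dν ξ).f _ (g.hom.f _ (mk 1 m))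
    rw [← whom_dnu g ξ]
    congr 1
    show mk (f := f) 1 ((V.dν ξ).f _ m) = ((dnuLin f V ξ)).f _ (mk 1 m)
    rw [dnuLin_mk]
    rw [show Q.dφ ξ (1 : Q.A) = 0 from by rw [Q.dφ_eq]; simp, mk_zero_left, zero_add]

variable {f V} in
/-- the bilinear map underlying the counit-side construction. -/
noncomputable def bil {W : WeakMod Q.toWeakPair} (h : V ⟶ f.restrictWeak.obj W) (n : ℤ) :
    Q.A →ₗ[k] (N V n →ₗ[k] W.M.X n) where
  toFun b := ((W.π b).f n).hom.comp (h.hom.f n).hom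
  map_add' b b' := LinearMap.ext fun m => by
    show (W.π (b + b')).f n (h.hom.f n m)
        = (W.π b).f n (h.hom.f n m) + (W.π b').f n (h.hom.f n m)
    erw [map_add, HomologicalComplex.add_f_apply, hadd]
  map_smul' c b := LinearMap.ext fun m => by
    show (W.π (c • b)).f n (h.hom.f n m) = c • (W.π b).f n (h.hom.f n m)
    erw [map_smul, HomologicalComplex.smul_f_apply, hsmul]

variable {f V} in
/-- backward direction of the adjunction hom-equivalence. -/
noncomputable def fromHom {W : WeakMod Q.toWeakPair} (h : V ⟶ f.restrictWeak.obj W) :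
    PwObj f V ⟶ W where
  hom :=
    { f := fun n => ModuleCat.ofHom <| Submodule.liftQ (rel f V n) (TensorProduct.lift (bil h n)) (by
        rw [rel, Submodule.span_le]
        rintro x ⟨b, a, m, rfl⟩
        simp only [SetLike.mem_coe, LinearMap.mem_ker, map_sub, TensorProduct.lift.tmul]
        show (W.π (b * f.fa a)).f n (h.hom.f n m)
            - (W.π b).f n (h.hom.f n ((V.π a).f n m)) = 0
        erw [whom_pi h a, map_mul, end_mul_apply']
        show (W.π b).f n ((W.π (f.fa a)).f n (h.hom.f n m))
            - (W.π b).f n ((W.π (f.fa a)).f n (h.hom.f n m)) = 0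
        rw [sub_self])
      comm' := fun n n' _ => by
        apply ModuleCat.hom_ext; apply text (f := f)
        intro b m
        show W.M.d n n' ((W.π b).f n (h.hom.f n m))
            = (W.π b).f n' (h.hom.f n' (V.M.d n n' m))
        rw [chainc h.hom m]
        show W.M.d n n' ((W.π b).f n (h.hom.f n m))
            = (W.π b).f n' (W.M.d n n' (h.hom.f n m))
        exact congrFun (congrArg ((fun φ' : W.M.X n ⟶ W.M.X n' => ⇑(ConcreteCategory.hom φ')))
          (((W.π b : W.M ⟶ W.M)).comm n n')) (h.hom.f n m) }
  comm_π b₀ := hom_ext fun n b m => by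
    show (W.π (b₀ * b)).f n (h.hom.f n m) = (W.π b₀).f n ((W.π b).f n (h.hom.f n m))
    erw [map_mul, end_mul_apply']
  comm_ν g₀ := hom_ext fun n b m => by
    show (W.π (Q.φ g₀ b)).f n (h.hom.f n (((V.ν g₀ : CategoryTheory.End V.M)).f n m))
        = ((W.ν g₀ : CategoryTheory.End W.M)).f n ((W.π b).f n (h.hom.f n m))
    erw [whom_nu h g₀, wpi_equiv W g₀ b]
    rfl
  comm_dν ξ := hom_ext fun n b m => by
    show (W.π (Q.dφ ξ b)).f n (h.hom.f n m)
          + (W.π b).f n (h.hom.f n ((V.dν ξ).f n m))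
        = (W.dν ξ).f n ((W.π b).f n (h.hom.f n m))
    erw [whom_dnu h ξ, wdnu_pi W ξ b]
    rfl

variable {f} in
@[simp] lemma fromHom_mk {W : WeakMod Q.toWeakPair} (h : V ⟶ f.restrictWeak.obj W)
    {n : ℤ} (b : Q.A) (m : N V n) :
    (fromHom h).hom.f n (mk b m) = (W.π b).f n (h.hom.f n m) := rfl

/-- the adjunction `B ⊗_A (−) ⊣ forget`. -/
noncomputable def adjW : Pw f ⊣ f.restrictWeak :=
  CategoryTheory.Adjunction.mkOfHomEquiv
    { homEquiv := fun V W =>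
        { toFun := toHom
          invFun := fromHom
          left_inv := fun g => WeakMod.Hom.ext (hom_ext fun n b m => by
            calc (fromHom (toHom g)).hom.f n (mk b m)
                = (W.π b).f n (g.hom.f n (mk 1 m)) := rfl
              _ = g.hom.f n (((piAlg f V b)).f n (mk 1 m)) := (whom_pi g b _).symm
              _ = g.hom.f n (mk b m) := by rw [piAlg_mk, mul_one])
          right_inv := fun h => WeakMod.Hom.ext (HomologicalComplex.hom_ext _ _ fun n =>
            ModuleCat.hom_ext (LinearMap.ext fun m => by
              calc (toHom (fromHom h)).hom.f n m
                  = (show (f.restrictWeak.obj W).M.X n from (W.π 1).f n (h.hom.f n m)) := rfl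
                _ = h.hom.f n m := by rw [map_one]; rfl)) }
      homEquiv_naturality_left_symm := fun φ g =>
        WeakMod.Hom.ext (hom_ext fun n b m => rfl)
      homEquiv_naturality_right := fun g t =>
        WeakMod.Hom.ext (HomologicalComplex.hom_ext _ _ fun n => ModuleCat.hom_ext (LinearMap.ext fun m => rfl)) }

/-- base change preserves strictness. -/
lemma strictPw (hV : IsStrict P V) : IsStrict Q (PwObj f V) := fun ξ =>
  hom_ext fun n b m => by
    show ((dnuLin f V ξ)).f n (mk b m) = ((piAlg f V (Q.ψ ξ))).f n (mk b m)
    rw [dnuLin_mk, piAlg_mk, hV ξ]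
    rw [show mk (f := f) b ((V.π (P.ψ ξ)).f n m) = mk (b * Q.ψ ξ) m from by
      rw [← mk_rel, f.comm_ψ]]
    rw [Q.dφ_eq, mk_sub_left]
    abel
/-- The restriction of base change to the subcategories of non-weak modules. -/
noncomputable def Pres (f : PairHomId P Q) :
      ObjectProperty.FullSubcategory (IsStrict P) ⥤ ObjectProperty.FullSubcategory (IsStrict Q) :=
  ObjectProperty.lift _ (ObjectProperty.ι (IsStrict P) ⋙ Pw f)
    (fun V => strictPw f V.obj V.property)

/-- The restricted adjunction. -/
noncomputable def adjRes (f : PairHomId P Q) : Pres f ⊣ f.restrict :=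
  (adjW f).restrictFullyFaithful
    (ObjectProperty.fullyFaithfulι (IsStrict P))
    (ObjectProperty.fullyFaithfulι (IsStrict Q))
    (ObjectProperty.liftCompιIso _ _ _).symm
    (ObjectProperty.liftCompιIso _ _ _).symm

end BC
end Scratch

theorem baseChange_strict_and_adjoint (f : PairHomId P Q) :
    (∃ (Pw : WeakMod P.toWeakPair ⥤ WeakMod Q.toWeakPair)
        (_ : Pw ⊣ f.restrictWeak),
        ∀ V : WeakMod P.toWeakPair, IsStrict P V → IsStrict Q (Pw.obj V)) ∧
      f.restrict.IsRightAdjoint :=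
  ⟨⟨BC.Pw f, BC.adjW f, fun V hV => BC.strictPw f V hV⟩, ⟨BC.Pres f, ⟨BC.adjRes f⟩⟩⟩
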